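/- With Γ, ∞, and d_i as in the previous setting, Σ_{i=1}^{k} d_i² = 2sn(s²n² − 6sn − 6s² + 10s + 8) + 9s³ + 3s² − 24s − 4, and consequently Σ_{i=1}^{k} (d_i − (sn−2))² = (s−1)s²(n−3)². -/

import Mathlib

open Matrix Polynomial

/- ### Auxiliary lemmas -/

lemma my_charpoly_conj {m : Type*} [Fintype m] [DecidableEq m] {R : Type*} [CommRing R]
    (U B W : Matrix m m R) (hUW : U * W = 1) (hWU : W * U = 1) :
    (U * B * W).charpoly = B.charpoly := by
  have hmap : ∀ P Q : Matrix m m R, (C : R →+* R[X]).mapMatrix (P * Q) =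
      (C : R →+* R[X]).mapMatrix P * (C : R →+* R[X]).mapMatrix Q := fun P Q => by
    exact _root_.map_mul (RingHom.mapMatrix (C : R →+* R[X])) P Q
  have key : charmatrix (U * B * W) =
      (C : R →+* R[X]).mapMatrix U * charmatrix B * (C : R →+* R[X]).mapMatrix W := by
    unfold charmatrix
    rw [mul_sub, sub_mul, ← hmap, ← hmap]
    congr 1
    · rw [mul_assoc, scalar_commute (X : R[X]) (Commute.all _) ((C : R →+* R[X]).mapMatrix W),
        ← mul_assoc, ← hmap, hUW]
      simp
  rw [Matrix.charpoly, key, det_mul, det_mul, mul_comm, ← mul_assoc, ← det_mul, ← hmap, hWU]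
  simp [Matrix.charpoly]

lemma my_charpoly_diagonal {m : Type*} [Fintype m] [DecidableEq m] {R : Type*} [CommRing R]
    (d : m → R) : (Matrix.diagonal d).charpoly = ∏ i, (X - C (d i)) := by
  rw [Matrix.charpoly]
  have : charmatrix (Matrix.diagonal d) = Matrix.diagonal fun i => (X : R[X]) - C (d i) := by
    ext i j
    by_cases h : i = j
    · subst h; simp
    · simp [charmatrix_apply_ne _ _ _ h, Matrix.diagonal_apply_ne _ h, Matrix.diagonal_apply_ne d h]
  rw [this, det_diagonal]

section spec
variable {m : Type*} [Fintype m] [DecidableEq m] {A : Matrix m m ℝ} (hA : A.IsHermitian)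

lemma my_spectral : A = (hA.eigenvectorUnitary : Matrix m m ℝ) * Matrix.diagonal hA.eigenvalues *
    (star hA.eigenvectorUnitary : Matrix m m ℝ) := by
  have := hA.spectral_theorem
  simpa [Function.comp] using this

lemma my_charpoly_eq : A.charpoly = ∏ i, (X - C (hA.eigenvalues i)) := by
  rw [← my_charpoly_diagonal hA.eigenvalues, ← my_charpoly_conj
    (hA.eigenvectorUnitary : Matrix m m ℝ) (Matrix.diagonal hA.eigenvalues)
    (star hA.eigenvectorUnitary : Matrix m m ℝ)
    (by exact Matrix.mem_unitaryGroup_iff.mp hA.eigenvectorUnitary.2)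
    (by exact Matrix.mem_unitaryGroup_iff'.mp hA.eigenvectorUnitary.2), ← my_spectral hA]

lemma eig_facts {K R1 R2 R3 : ℝ} {a b e : ℕ} (ha : a ≠ 0) (hb : b ≠ 0) (he : e ≠ 0)
    (h1 : K ≠ R1) (h2 : K ≠ R2) (h3 : K ≠ R3)
    (hspec : A.charpoly = (X - C K) * (X - C R1) ^ a * (X - C R2) ^ b * (X - C R3) ^ e) :
    (∀ i, hA.eigenvalues i = K ∨ hA.eigenvalues i = R1 ∨ hA.eigenvalues i = R2 ∨
      hA.eigenvalues i = R3) ∧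
    (Finset.univ.filter fun i => hA.eigenvalues i = K).card = 1 ∧
    Fintype.card m = 1 + a + b + e := by
  set ev := hA.eigenvalues with hev
  have hprod : ∏ i, (X - C (ev i)) =
      (X - C K) * (X - C R1) ^ a * (X - C R2) ^ b * (X - C R3) ^ e := by
    rw [← my_charpoly_eq hA, hspec]
  have hlhs : (∏ i, (X - C (ev i))).roots = Multiset.map ev Finset.univ.val := by
    have : ∏ i, (X - C (ev i)) =
        (Multiset.map (fun r : ℝ => X - C r) (Multiset.map ev Finset.univ.val)).prod := by
      rw [Multiset.map_map]; rfl
    rw [this, roots_multiset_prod_X_sub_C]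
  have hne : ∀ (r : ℝ) (j : ℕ), (X - C r) ^ j ≠ (0 : ℝ[X]) :=
    fun r j => pow_ne_zero _ (X_sub_C_ne_zero r)
  have hrhs : ((X - C K) * (X - C R1) ^ a * (X - C R2) ^ b * (X - C R3) ^ e).roots =
      {K} + a • {R1} + b • {R2} + e • {R3} := by
    rw [roots_mul (mul_ne_zero (mul_ne_zero (mul_ne_zero (X_sub_C_ne_zero K) (hne R1 a))
        (hne R2 b)) (hne R3 e)),
      roots_mul (mul_ne_zero (mul_ne_zero (X_sub_C_ne_zero K) (hne R1 a)) (hne R2 b)),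
      roots_mul (mul_ne_zero (X_sub_C_ne_zero K) (hne R1 a)),
      roots_pow, roots_pow, roots_pow, roots_X_sub_C, roots_X_sub_C, roots_X_sub_C,
      roots_X_sub_C]
  have hroots : Multiset.map ev Finset.univ.val = {K} + a • {R1} + b • {R2} + e • {R3} := by
    rw [← hlhs, hprod, hrhs]
  refine ⟨?_, ?_, ?_⟩
  · intro i
    have hi : ev i ∈ Multiset.map ev Finset.univ.val :=
      Multiset.mem_map_of_mem ev (Finset.mem_univ i)
    rw [hroots] at hi
    simp only [Multiset.mem_add, Multiset.mem_nsmul, Multiset.mem_singleton, ha, hb, he,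
      ne_eq, not_false_iff, false_or] at hi
    tauto
  · have hcount := congrArg (Multiset.count K) hroots
    rw [Multiset.count_map] at hcount
    simp only [Multiset.count_add, Multiset.count_nsmul, Multiset.count_singleton] at hcount
    simp only [if_neg h1, if_neg h2, if_neg h3, if_pos trivial, mul_zero, add_zero] at hcount
    have hfil : Multiset.filter (fun i => ev i = K) Finset.univ.val =
        Multiset.filter (fun a => K = ev a) Finset.univ.val :=
      Multiset.filter_congr (fun x _ => ⟨Eq.symm, Eq.symm⟩)
    rw [Finset.card_def, Finset.filter_val, hfil, hcount]
  · have hcard := congrArg Multiset.card hroots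
    simp only [Multiset.card_map, Multiset.card_add, Multiset.card_nsmul,
      Multiset.card_singleton, mul_one] at hcard
    rw [Fintype.card, Finset.card_def, hcard]

lemma flat_entries [Nonempty m] {K R1 R2 R3 : ℝ}
    (hev : ∀ i, hA.eigenvalues i = K ∨ hA.eigenvalues i = R1 ∨ hA.eigenvalues i = R2 ∨
      hA.eigenvalues i = R3)
    (hcount : (Finset.univ.filter fun i => hA.eigenvalues i = K).card = 1)
    (hrow : A *ᵥ (fun _ => (1 : ℝ)) = fun _ => K)
    (h1 : K ≠ R1) (h2 : K ≠ R2) (h3 : K ≠ R3)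
    (hcpos : 0 < (K - R1) * ((K - R2) * (K - R3))) :
    ∀ x y, ((A - R1 • 1) * ((A - R2 • 1) * (A - R3 • 1))) x y =
      (K - R1) * ((K - R2) * (K - R3)) / Fintype.card m := by
  classical
  set ev := hA.eigenvalues with hev'
  set c : ℝ := (K - R1) * ((K - R2) * (K - R3)) with hc
  set U : Matrix m m ℝ := (hA.eigenvectorUnitary : Matrix m m ℝ) with hU
  set W : Matrix m m ℝ := (star hA.eigenvectorUnitary : Matrix m m ℝ) with hW
  have hUW : U * W = 1 := Matrix.mem_unitaryGroup_iff.mp hA.eigenvectorUnitary.2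
  have hWU : W * U = 1 := Matrix.mem_unitaryGroup_iff'.mp hA.eigenvectorUnitary.2
  have hAeq : A = U * Matrix.diagonal ev * W := by
    have := hA.spectral_theorem; simpa [Function.comp] using this
  have hconj_mul : ∀ d e : m → ℝ, (U * Matrix.diagonal d * W) * (U * Matrix.diagonal e * W) =
      U * Matrix.diagonal (d * e) * W := by
    intro d e
    rw [show U * Matrix.diagonal d * W * (U * Matrix.diagonal e * W)
        = U * Matrix.diagonal d * (W * U) * Matrix.diagonal e * W by noncomm_ring,
      hWU, mul_one, mul_assoc, mul_assoc, ← mul_assoc (Matrix.diagonal d),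
      Matrix.diagonal_mul_diagonal, ← mul_assoc]
    rfl
  have hsub : ∀ r : ℝ, A - r • 1 = U * Matrix.diagonal (fun i => ev i - r) * W := by
    intro r
    have h1 : (r • 1 : Matrix m m ℝ) = U * Matrix.diagonal (fun _ => r) * W := by
      rw [show Matrix.diagonal (fun _ : m => r) = r • 1 by
          rw [← Matrix.smul_one_eq_diagonal]]
      rw [mul_smul_comm, mul_one, smul_mul_assoc, hUW]
    rw [hAeq, h1, ← Matrix.sub_mul, ← Matrix.mul_sub, Matrix.diagonal_sub]
  set d : m → ℝ := fun i => (ev i - R1) * ((ev i - R2) * (ev i - R3)) with hd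
  set M : Matrix m m ℝ := (A - R1 • 1) * ((A - R2 • 1) * (A - R3 • 1)) with hM
  have hMeq : M = U * Matrix.diagonal d * W := by
    rw [hM, hsub R1, hsub R2, hsub R3, hconj_mul, hconj_mul]
    congr 1
  have hdi : ∀ i, d i = if ev i = K then c else 0 := by
    intro i
    rcases hev i with h | h | h | h
    · rw [hd, hc]; simp [h]
    · rw [hd]; simp only [h, if_neg (fun hh : R1 = K => h1 hh.symm)]
      rw [sub_self, zero_mul]
    · rw [hd]; simp only [h, if_neg (fun hh : R2 = K => h2 hh.symm)]
      rw [sub_self, zero_mul, mul_zero]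
    · rw [hd]; simp only [h, if_neg (fun hh : R3 = K => h3 hh.symm)]
      rw [sub_self, mul_zero, mul_zero]
  have htr : Matrix.trace M = c := by
    rw [hMeq, Matrix.trace_mul_cycle, hWU, one_mul, Matrix.trace_diagonal]
    rw [Finset.sum_congr rfl (fun i _ => hdi i), Finset.sum_ite, Finset.sum_const,
      Finset.sum_const_zero, add_zero, hcount, one_smul]
  have hM2 : M * M = c • M := by
    have hdd : d * d = c • d := by
      funext i
      simp only [Pi.mul_apply, Pi.smul_apply, smul_eq_mul, hdi i]
      by_cases h : ev i = K <;> simp [h]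
    rw [hMeq, hconj_mul, hdd, Matrix.diagonal_smul, Matrix.mul_smul, Matrix.smul_mul]
  have hMH : M.IsHermitian := by
    rw [hMeq, Matrix.IsHermitian, Matrix.conjTranspose_mul, Matrix.conjTranspose_mul,
      (Matrix.isHermitian_diagonal d).eq, ← Matrix.star_eq_conjTranspose,
      ← Matrix.star_eq_conjTranspose, hW, star_star, mul_assoc, hU]
  have hMsymm : ∀ x y, M x y = M y x := fun x y => by
    conv_lhs => rw [← hMH.eq]
    simp [Matrix.conjTranspose_apply]
  have hrowM : ∀ x, ∑ y, M x y = c := by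
    have hmul : ∀ (r : ℝ), (A - r • 1) *ᵥ (fun _ => (1:ℝ)) = fun _ => K - r := by
      intro r
      funext x
      simp [Matrix.sub_mulVec, hrow, Matrix.smul_mulVec, Matrix.one_mulVec]
    have hvec : M *ᵥ (fun _ => (1:ℝ)) = fun _ => c := by
      rw [hM, ← Matrix.mulVec_mulVec, ← Matrix.mulVec_mulVec, hmul]
      have h3 : (fun _ : m => K - R3) = (K - R3) • (fun _ : m => (1:ℝ)) := by
        funext x; simp
      rw [h3, Matrix.mulVec_smul, hmul]
      have h4 : (fun _ : m => K - R2) = (K - R2) • (fun _ : m => (1:ℝ)) := by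
        funext x; simp
      rw [h4, smul_smul, Matrix.mulVec_smul, hmul]
      funext x
      simp only [Pi.smul_apply, smul_eq_mul, hc]
      ring
    intro x
    have := congrFun hvec x
    simpa [Matrix.mulVec, dotProduct] using this
  set N : ℕ := Fintype.card m with hN
  have hNpos : (0:ℝ) < N := by
    have : 0 < N := Fintype.card_pos
    exact_mod_cast this
  have hsq : ∀ x, ∑ y, (M x y) ^ 2 = c * M x x := by
    intro x
    have := congrFun (congrFun hM2 x) x
    simp only [Matrix.mul_apply, Matrix.smul_apply, smul_eq_mul] at this
    rw [← this]
    exact Finset.sum_congr rfl fun y _ => by rw [sq, ← hMsymm x y]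
  have hdiag_ge : ∀ x, c / N ≤ M x x := by
    intro x
    have hcs := sq_sum_le_card_mul_sum_sq (s := (Finset.univ : Finset m))
      (f := fun y => M x y)
    rw [hrowM x, hsq x, Finset.card_univ] at hcs
    rw [div_le_iff₀ hNpos]
    nlinarith
  have hdiag : ∀ x, M x x = c / N := by
    have hsum : ∑ x, M x x = ∑ x : m, c / N := by
      have h5 : ∑ x : m, c / N = c := by
        rw [Finset.sum_const, Finset.card_univ, nsmul_eq_mul]
        field_simp
        rfl
      rw [h5, ← htr]; rfl
    intro x
    have := (Finset.sum_eq_sum_iff_of_le (fun i _ => hdiag_ge i)).mp hsum.symm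
    exact (this x (Finset.mem_univ x)).symm
  intro x y
  have hzero : ∑ z, (M x z - c / N) ^ 2 = 0 := by
    have expand : ∀ z, (M x z - c / N) ^ 2 =
        (M x z) ^ 2 - 2 * (c / N) * (M x z) + (c / N) ^ 2 := fun z => by ring
    rw [Finset.sum_congr rfl (fun z _ => expand z), Finset.sum_add_distrib,
      Finset.sum_sub_distrib, ← Finset.mul_sum, Finset.sum_const, Finset.card_univ,
      nsmul_eq_mul, hsq x, hrowM x, hdiag x]
    field_simp
    ring
  have hy := (Finset.sum_eq_zero_iff_of_nonneg (fun z _ => sq_nonneg _)).mp hzero y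
    (Finset.mem_univ y)
  have h6 := sub_eq_zero.mp (sq_eq_zero_iff.mp hy)
  rw [hM] at h6 ⊢
  rw [h6]

end spec

set_option maxHeartbeats 1000000 in
/-- For a co-edge-regular graph (`μ = 4s`) cospectral with the `s`-clique extension of
`T(n)`, the sum of the squared valencies inside the local graph of any vertex equals
`2sn(s²n² − 6sn − 6s² + 10s + 8) + 9s³ + 3s² − 24s − 4`, and consequently
`Σ (d_i − (sn−2))² = (s−1)s²(n−3)²`. -/
theorem local_degree_square_sum {V : Type*} [Fintype V] [DecidableEq V]
    (G : SimpleGraph V) [DecidableRel G.Adj]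
    (s n : ℕ) (hs : 2 ≤ s) (hn : 4 ≤ n)
    (hreg : G.IsRegularOfDegree (s * (2 * n - 3) - 1))
    (hcoedge : ∀ x y : V, x ≠ y → ¬ G.Adj x y →
      (G.neighborFinset x ∩ G.neighborFinset y).card = 4 * s)
    (hspec : (G.adjMatrix ℝ).charpoly =
      (X - C ((s : ℝ) * (2 * n - 3) - 1)) *
        (X - C ((s : ℝ) * ((n : ℝ) - 3) - 1)) ^ (n - 1) *
        (X - C (-(s : ℝ) - 1)) ^ ((n ^ 2 - 3 * n) / 2) *
        (X - C (-1)) ^ ((s - 1) * n * (n - 1) / 2))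
    (v : V) :
    (∑ y ∈ G.neighborFinset v, ((G.neighborFinset v ∩ G.neighborFinset y).card : ℤ) ^ 2) =
      2 * (s : ℤ) * n * ((s : ℤ) ^ 2 * n ^ 2 - 6 * s * n - 6 * s ^ 2 + 10 * s + 8)
        + 9 * s ^ 3 + 3 * s ^ 2 - 24 * s - 4 ∧
    (∑ y ∈ G.neighborFinset v,
        (((G.neighborFinset v ∩ G.neighborFinset y).card : ℤ) - ((s : ℤ) * n - 2)) ^ 2) =
      ((s : ℤ) - 1) * s ^ 2 * ((n : ℤ) - 3) ^ 2 := by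
  classical
  have : Nonempty V := ⟨v⟩
  set A : Matrix V V ℝ := G.adjMatrix ℝ with hAdef
  have hA : A.IsHermitian := by
    rw [Matrix.IsHermitian, conjTranspose_eq_transpose_of_trivial]
    exact (SimpleGraph.isSymm_adjMatrix G)
  have hs' : (2:ℝ) ≤ (s:ℝ) := by exact_mod_cast hs
  have hn' : (4:ℝ) ≤ (n:ℝ) := by exact_mod_cast hn
  set K : ℝ := (s : ℝ) * (2 * (n:ℝ) - 3) - 1 with hK
  set R1 : ℝ := (s : ℝ) * ((n : ℝ) - 3) - 1 with hR1
  set R2 : ℝ := -(s : ℝ) - 1 with hR2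
  set R3 : ℝ := (-1 : ℝ) with hR3
  -- positivity of eigenvalue gaps
  have p1 : (0:ℝ) < K - R1 := by rw [hK, hR1]; nlinarith
  have p2 : (0:ℝ) < K - R2 := by rw [hK, hR2]; nlinarith
  have p3 : (0:ℝ) < K - R3 := by rw [hK, hR3]; nlinarith
  have h1 : K ≠ R1 := (sub_pos.mp p1).ne'
  have h2 : K ≠ R2 := (sub_pos.mp p2).ne'
  have h3 : K ≠ R3 := (sub_pos.mp p3).ne'
  have hcpos : (0:ℝ) < (K - R1) * ((K - R2) * (K - R3)) := mul_pos p1 (mul_pos p2 p3)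
  -- exponents
  have ha0 : n - 1 ≠ 0 := by omega
  have hnn : n ^ 2 = n * n := sq n
  have h4n : 4 * n ≤ n * n := Nat.mul_le_mul_right n hn
  have hb0 : (n ^ 2 - 3 * n) / 2 ≠ 0 := by
    have : 2 ≤ n ^ 2 - 3 * n := by omega
    exact (Nat.div_pos this (by norm_num)).ne'
  have he0 : (s - 1) * n * (n - 1) / 2 ≠ 0 := by
    have h12 : 1 * 4 * 3 ≤ (s - 1) * n * (n - 1) :=
      Nat.mul_le_mul (Nat.mul_le_mul (by omega) (by omega)) (by omega)
    exact (Nat.div_pos (by omega) (by norm_num)).ne'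
  -- cast of the degree
  have hKcast : ((s * (2 * n - 3) - 1 : ℕ) : ℝ) = K := by
    have hh1 : 3 ≤ 2 * n := by omega
    have hh2 : 1 ≤ s * (2 * n - 3) := by
      have : 1 * 1 ≤ s * (2 * n - 3) := Nat.mul_le_mul (by omega) (by omega)
      omega
    push_cast [hh2, hh1]
    try rw [hK]
    try ring
  -- regular row sums
  have hrow : A *ᵥ (fun _ => (1:ℝ)) = fun _ => K := by
    funext x
    rw [hAdef, SimpleGraph.adjMatrix_mulVec_apply, Finset.sum_const, nsmul_eq_mul, mul_one,
      SimpleGraph.card_neighborFinset_eq_degree, hreg x, hKcast]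
  -- spectral facts
  have hspec' : A.charpoly = (X - C K) * (X - C R1) ^ (n-1) * (X - C R2) ^ ((n^2-3*n)/2)
      * (X - C R3) ^ ((s-1)*n*(n-1)/2) := by
    rw [hAdef, hspec, hK, hR1, hR2, hR3]
  obtain ⟨hev, hcount, hcard⟩ := eig_facts hA ha0 hb0 he0 h1 h2 h3 hspec'
  -- entries of the Hoffman-like matrix
  have hMent := flat_entries hA hev hcount hrow h1 h2 h3 hcpos
  set c : ℝ := (K - R1) * ((K - R2) * (K - R3)) with hc
  set N : ℕ := Fintype.card V with hNdef
  -- the value of N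
  have hd1 : 2 ∣ n ^ 2 - 3 * n := by
    rcases Nat.even_or_odd n with he | ho
    · exact Nat.dvd_sub (by rw [hnn]; exact he.two_dvd.mul_right n)
        (he.two_dvd.mul_left 3)
    · have h1' : Odd (n ^ 2) := ho.pow
      have h2' : Odd (3 * n) := (Nat.odd_iff.mpr rfl).mul ho
      exact (Nat.Odd.sub_odd h1' h2').two_dvd
  have hd2 : 2 ∣ (s - 1) * n * (n - 1) := by
    have hnn1 : 2 ∣ n * (n - 1) := by
      rcases Nat.even_or_odd n with he | ho
      · exact Dvd.dvd.mul_right he.two_dvd _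
      · exact Dvd.dvd.mul_left (Nat.Odd.sub_odd ho odd_one).two_dvd n
    rw [mul_assoc]
    exact Dvd.dvd.mul_left hnn1 _
  have hNr : (N : ℝ) = (s:ℝ) * n * ((n:ℝ) - 1) / 2 := by
    rw [hcard]
    push_cast [Nat.cast_div hd1 (by norm_num : (2:ℝ) ≠ 0),
      Nat.cast_div hd2 (by norm_num : (2:ℝ) ≠ 0), hn, hs,
      (by omega : 3 * n ≤ n ^ 2), (by omega : 1 ≤ n), (by omega : 1 ≤ s)]
    ring
  have hNne : (N : ℝ) ≠ 0 := by
    have : (0:ℕ) < N := Fintype.card_pos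
    positivity
  -- matrix expansions
  set M : Matrix V V ℝ := (A - R1 • 1) * ((A - R2 • 1) * (A - R3 • 1)) with hMdef
  set σ1 : ℝ := R1 + R2 + R3 with hσ1
  set σ2 : ℝ := R1 * R2 + R1 * R3 + R2 * R3 with hσ2
  set σ3 : ℝ := R1 * R2 * R3 with hσ3
  have hexp3 : M = A * A * A - σ1 • (A * A) + σ2 • A - σ3 • 1 := by
    rw [hMdef, hσ1, hσ2, hσ3]
    simp only [Matrix.sub_mul, Matrix.mul_sub, smul_mul_assoc, mul_smul_comm, smul_smul,
      Matrix.mul_one, Matrix.one_mul, mul_assoc]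
    module
  have hexp4 : A * M = A * A * A * A - σ1 • (A * A * A) + σ2 • (A * A) - σ3 • A := by
    rw [hMdef, hσ1, hσ2, hσ3]
    simp only [Matrix.sub_mul, Matrix.mul_sub, smul_mul_assoc, mul_smul_comm, smul_smul,
      Matrix.mul_one, Matrix.one_mul, mul_assoc]
    module
  -- entry computations
  have hA2ent : ∀ x y : V, (A * A) x y =
      ((G.neighborFinset x ∩ G.neighborFinset y).card : ℝ) := by
    intro x y
    rw [hAdef, SimpleGraph.adjMatrix_mul_apply]
    have hcongr : ∀ u ∈ G.neighborFinset x, G.adjMatrix ℝ u y = if G.Adj u y then 1 else 0 :=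
      fun u _ => rfl
    rw [Finset.sum_congr rfl hcongr, Finset.sum_boole]
    congr 1
    congr 1
    ext u
    simp [SimpleGraph.mem_neighborFinset, G.adj_comm]
  set t : Finset V := G.neighborFinset v with ht
  have htcard : (t.card : ℝ) = K := by
    rw [ht, SimpleGraph.card_neighborFinset_eq_degree, hreg v, hKcast]
  set S1 : ℝ := ∑ y ∈ t, ((G.neighborFinset v ∩ G.neighborFinset y).card : ℝ) with hS1def
  set S2 : ℝ := ∑ y ∈ t, ((G.neighborFinset v ∩ G.neighborFinset y).card : ℝ) ^ 2 with hS2def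
  have hA2vv : (A * A) v v = K := by
    rw [hA2ent v v, Finset.inter_self, ← ht, htcard]
  have hAvv : A v v = 0 := by simp [hAdef]
  have hA3vv : (A * A * A) v v = S1 := by
    conv_lhs => rw [hAdef]
    rw [SimpleGraph.mul_adjMatrix_apply]
    refine Finset.sum_congr rfl fun u _ => ?_
    rw [← hAdef]
    exact hA2ent v u
  have hMvv : M v v = c / N := hMent v v
  have hAMvv : (A * M) v v = K * (c / N) := by
    conv_lhs => rw [hAdef]
    rw [SimpleGraph.adjMatrix_mul_apply]
    rw [Finset.sum_congr rfl fun u _ => hMent u v, Finset.sum_const, nsmul_eq_mul, ← ht,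
      htcard]
  -- the S1 equation
  have hS1eq : S1 - σ1 * K + σ2 * 0 - σ3 * 1 = c / N := by
    have := congrFun (congrFun hexp3 v) v
    simp only [Matrix.sub_apply, Matrix.add_apply, Matrix.smul_apply, smul_eq_mul,
      Matrix.one_apply_eq] at this
    rw [hA3vv, hA2vv, hAvv] at this
    rw [← this]
    exact hMvv
  -- the quartic diagonal entry
  have hsym2 : ∀ y, (A * A) y v = (A * A) v y := by
    intro y
    rw [hA2ent, hA2ent, Finset.inter_comm]
  have hA4vv : (A * A * A * A) v v = ∑ y, ((A * A) v y) ^ 2 := by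
    rw [mul_assoc (A * A) A A, Matrix.mul_apply]
    exact Finset.sum_congr rfl fun y _ => by rw [hsym2 y, sq]
  -- splitting the sum over all vertices
  set u : Finset V := insert v t with hu
  have hvnott : v ∉ t := by rw [ht]; exact SimpleGraph.notMem_neighborFinset_self G v
  have hucard : u.card = t.card + 1 := by rw [hu, Finset.card_insert_of_notMem hvnott]
  have huN : t.card + 1 ≤ N := by
    rw [← hucard, hNdef, ← Finset.card_univ]
    exact Finset.card_le_univ u
  have hsplit : ∑ y, ((A * A) v y) ^ 2 =
      (∑ y ∈ Finset.univ \ u, ((A * A) v y) ^ 2) + (((A * A) v v) ^ 2 + S2) := by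
    rw [← Finset.sum_sdiff (Finset.subset_univ u)]
    congr 1
    rw [hu, Finset.sum_insert hvnott]
    congr 1
    rw [hS2def]
    exact Finset.sum_congr rfl fun y _ => by rw [hA2ent]
  have houter : ∀ y ∈ Finset.univ \ u, ((A * A) v y) ^ 2 = (4 * (s:ℝ)) ^ 2 := by
    intro y hy
    rw [hu, Finset.mem_sdiff, Finset.mem_insert] at hy
    push_neg at hy
    have hyv : y ≠ v := hy.2.1
    have hyt : y ∉ t := hy.2.2
    have hnadj : ¬ G.Adj v y := by
      rw [ht] at hyt
      intro hadj
      exact hyt ((SimpleGraph.mem_neighborFinset G v y).mpr hadj)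
    have := hcoedge v y (Ne.symm hyv) hnadj
    rw [hA2ent v y, this]
    push_cast
    ring
  have houtcard : ((Finset.univ \ u).card : ℝ) = (N : ℝ) - (K + 1) := by
    have hcardsd : (Finset.univ \ u).card = N - (t.card + 1) := by
      rw [Finset.card_sdiff_of_subset (Finset.subset_univ u), hucard, Finset.card_univ, hNdef]
    rw [hcardsd, Nat.cast_sub huN]
    push_cast [htcard]
    ring
  have hS2eq : K * (c / N) = (K^2 + S2 + ((N:ℝ) - (K+1)) * (4*(s:ℝ))^2)
      - σ1 * S1 + σ2 * K - σ3 * 0 := by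
    have := congrFun (congrFun hexp4 v) v
    simp only [Matrix.sub_apply, Matrix.add_apply, Matrix.smul_apply, smul_eq_mul] at this
    rw [hA4vv, hA3vv, hA2vv, hAvv, hsplit] at this
    rw [Finset.sum_congr rfl houter, Finset.sum_const, nsmul_eq_mul, houtcard] at this
    rw [← hAMvv, this, hA2vv]
    ring
  -- real versions of the two goals
  have hcval : c = (K - R1) * ((K - R2) * (K - R3)) := hc
  have hquot : c / (N:ℝ) = 4 * (s:ℝ)^2 * (2 * (n:ℝ) - 3) := by
    have hceq : c = (4 * (s:ℝ)^2 * (2 * (n:ℝ) - 3)) * (N:ℝ) := by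
      rw [hcval, hK, hR1, hR2, hR3, hNr]; ring
    rw [hceq, mul_div_assoc, div_self hNne, mul_one]
  have hreal1 : S2 = 2 * (s:ℝ) * n * ((s:ℝ)^2 * n^2 - 6 * s * n - 6 * s^2 + 10 * s + 8)
      + 9 * s^3 + 3 * s^2 - 24 * s - 4 := by
    have hS1v : S1 = c / N + σ1 * K + σ3 := by linarith [hS1eq]
    have hS2v : S2 = K * (c/N) + σ1 * S1 - σ2 * K - K^2 - ((N:ℝ) - (K+1)) * (4*s)^2 := by
      linarith [hS2eq]
    rw [hS2v, hS1v, hquot, hσ1, hσ2, hσ3, hNr, hK, hR1, hR2, hR3]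
    ring
  have hreal2 : ∑ y ∈ t, (((G.neighborFinset v ∩ G.neighborFinset y).card : ℝ)
      - ((s:ℝ) * n - 2)) ^ 2 = ((s:ℝ) - 1) * s^2 * ((n:ℝ) - 3)^2 := by
    have hS1v : S1 = c / N + σ1 * K + σ3 := by linarith [hS1eq]
    have expand : ∀ y ∈ t, (((G.neighborFinset v ∩ G.neighborFinset y).card : ℝ)
        - ((s:ℝ) * n - 2)) ^ 2 = ((G.neighborFinset v ∩ G.neighborFinset y).card : ℝ)^2
        - 2 * ((s:ℝ)*n - 2) * ((G.neighborFinset v ∩ G.neighborFinset y).card : ℝ)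
        + ((s:ℝ)*n - 2)^2 := fun y _ => by ring
    rw [Finset.sum_congr rfl expand, Finset.sum_add_distrib, Finset.sum_sub_distrib,
      ← Finset.mul_sum, Finset.sum_const, nsmul_eq_mul, htcard, ← hS2def, ← hS1def,
      hreal1, hS1v, hquot, hσ1, hσ3, hK, hR1, hR2, hR3]
    ring
  constructor
  · have : ((∑ y ∈ t, ((G.neighborFinset v ∩ G.neighborFinset y).card : ℤ) ^ 2 : ℤ) : ℝ)
        = ((2 * (s : ℤ) * n * ((s : ℤ) ^ 2 * n ^ 2 - 6 * s * n - 6 * s ^ 2 + 10 * s + 8)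
        + 9 * s ^ 3 + 3 * s ^ 2 - 24 * s - 4 : ℤ) : ℝ) := by
      push_cast
      rw [← hS2def] at *
      exact hreal1
    exact_mod_cast this
  · have : ((∑ y ∈ t, (((G.neighborFinset v ∩ G.neighborFinset y).card : ℤ)
        - ((s : ℤ) * n - 2)) ^ 2 : ℤ) : ℝ)
        = ((((s : ℤ) - 1) * s ^ 2 * ((n : ℤ) - 3) ^ 2 : ℤ) : ℝ) := by
      push_cast
      exact hreal2
    exact_mod_cast this
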